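/- Let C be a 2×2 complex matrix that is diagonalizable and positive stable (all eigenvalues have positive real part), and let μ be the minimum of the real parts of its eigenvalues. If P is a positive definite Hermitian 2×2 matrix satisfying C*P + PC ≥ 2μP (in the sense of Hermitian matrices), then P can be written as P = b₁ w₁w₁* + b₂ w₂w₂*, where w₁, w₂ are normalized eigenvectors of C* and b₁, b₂ > 0. -/

import Mathlib

open Matrix Complex Finset
open scoped ComplexOrder

lemma psd_mulVec_eq_zero {n : Type*} [Fintype n] [DecidableEq n] {M : Matrix n n ℂ}
    (hM : M.PosSemidef) {v : n → ℂ} (h : star v ⬝ᵥ M.mulVec v = 0) : M.mulVec v = 0 := by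
  exact (hM.dotProduct_mulVec_zero_iff v).mp h

lemma decomp_helper (V W : Matrix (Fin 2) (Fin 2) ℂ) (f : Fin 2 → ℂ) :
    V * diagonal f * W = ∑ j, f j • vecMulVec (fun i => V i j) (fun k => W j k) := by
  ext i k
  simp [mul_apply, diagonal_apply, vecMulVec_apply, Finset.sum_apply, Fin.sum_univ_two]
  ring

lemma normalize_decomp (P C : Matrix (Fin 2) (Fin 2) ℂ) (w : Fin 2 → Fin 2 → ℂ)
    (c : Fin 2 → ℝ) (lam : Fin 2 → ℂ)
    (hw0 : ∀ j, w j ≠ 0) (hc : ∀ j, 0 < c j)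
    (heig : ∀ j, Cᴴ.mulVec (w j) = (starRingEnd ℂ) (lam j) • w j)
    (hdec : P = ∑ j, (c j : ℂ) • vecMulVec (w j) (star (w j))) :
    ∃ (w' : Fin 2 → Fin 2 → ℂ) (b : Fin 2 → ℝ) (lam' : Fin 2 → ℂ),
      (∀ j, 0 < b j) ∧ (∀ j, ∑ i, ‖w' j i‖ ^ 2 = 1) ∧ (∀ j, w' j ≠ 0) ∧
      (∀ j, Cᴴ.mulVec (w' j) = (starRingEnd ℂ) (lam' j) • w' j) ∧
      P = ∑ j, (b j : ℂ) • vecMulVec (w' j) (star (w' j)) := by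
  have hs : ∀ j, 0 < ∑ i, ‖w j i‖ ^ 2 := by
    intro j
    obtain ⟨i, hi⟩ := Function.ne_iff.mp (hw0 j)
    exact Finset.sum_pos' (fun i _ => by positivity)
      ⟨i, Finset.mem_univ i, by simpa using pow_pos (norm_pos_iff.mpr hi) 2⟩
  set n : Fin 2 → ℝ := fun j => Real.sqrt (∑ i, ‖w j i‖ ^ 2) with hn
  have hnpos : ∀ j, 0 < n j := fun j => Real.sqrt_pos.mpr (hs j)
  have hnsq : ∀ j, n j ^ 2 = ∑ i, ‖w j i‖ ^ 2 := fun j => Real.sq_sqrt (hs j).le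
  refine ⟨fun j => ((n j)⁻¹ : ℂ) • w j, fun j => c j * n j ^ 2, lam, ?_, ?_, ?_, ?_, ?_⟩
  · intro j; exact mul_pos (hc j) (pow_pos (hnpos j) 2)
  · intro j
    have : ∀ i, ‖(((n j)⁻¹ : ℂ) • w j) i‖ ^ 2 = (n j)⁻¹ ^ 2 * ‖w j i‖ ^ 2 := by
      intro i
      simp [norm_smul, mul_pow, abs_of_pos (inv_pos.mpr (hnpos j))]
    rw [Finset.sum_congr rfl fun i _ => this i, ← Finset.mul_sum, ← hnsq j]
    field_simp
    exact div_self (hnpos j).ne'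
  · intro j
    exact smul_ne_zero (by exact_mod_cast (inv_pos.mpr (hnpos j)).ne') (hw0 j)
  · intro j
    rw [mulVec_smul, heig j, smul_comm]
  · rw [hdec]
    refine Finset.sum_congr rfl fun j _ => ?_
    ext i k
    simp only [Matrix.smul_apply, vecMulVec_apply, Pi.smul_apply, Pi.star_apply, smul_eq_mul,
      star_mul', star_inv₀, Complex.star_def, Complex.conj_ofReal]
    push_cast
    have h1 : (n j : ℂ) ≠ 0 := by exact_mod_cast (hnpos j).ne'
    field_simp

theorem stmt0 (C : Matrix (Fin 2) (Fin 2) ℂ) (μ : ℝ)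
    (hdiag : ∃ V D : Matrix (Fin 2) (Fin 2) ℂ, IsUnit V.det ∧ D.IsDiag ∧ C = V * D * V⁻¹)
    (hstable : ∀ lam : ℂ, (∃ v : Fin 2 → ℂ, v ≠ 0 ∧ C.mulVec v = lam • v) → 0 < lam.re)
    (hμ1 : ∀ lam : ℂ, (∃ v : Fin 2 → ℂ, v ≠ 0 ∧ C.mulVec v = lam • v) → μ ≤ lam.re)
    (hμ2 : ∃ lam : ℂ, (∃ v : Fin 2 → ℂ, v ≠ 0 ∧ C.mulVec v = lam • v) ∧ lam.re = μ)
    (P : Matrix (Fin 2) (Fin 2) ℂ) (hP : P.PosDef)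
    (hineq : (Cᴴ * P + P * C - ((2 * μ : ℝ) : ℂ) • P).PosSemidef) :
    ∃ (w : Fin 2 → Fin 2 → ℂ) (b : Fin 2 → ℝ) (lam : Fin 2 → ℂ),
      (∀ j, 0 < b j) ∧ (∀ j, ∑ i, ‖w j i‖ ^ 2 = 1) ∧ (∀ j, w j ≠ 0) ∧
      (∀ j, Cᴴ.mulVec (w j) = (starRingEnd ℂ) (lam j) • w j) ∧
      P = ∑ j, (b j : ℂ) • vecMulVec (w j) (star (w j)) := by
  obtain ⟨V, D, hV, hD, hC⟩ := hdiag
  obtain ⟨lam, ⟨v, hv0, hvC⟩, hlam⟩ := hμ2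
  have hDdiag : D = diagonal D.diag := (hD.diagonal_diag).symm
  -- quadratic form vanishes on v
  have hq : star v ⬝ᵥ (Cᴴ * P + P * C - ((2 * μ : ℝ) : ℂ) • P).mulVec v = 0 := by
    have h1 : star v ⬝ᵥ (Cᴴ * P).mulVec v
        = (starRingEnd ℂ) lam * (star v ⬝ᵥ P.mulVec v) := by
      rw [← mulVec_mulVec, dotProduct_mulVec, ← star_mulVec, hvC, star_smul,
        smul_dotProduct]
      rfl
    have h2 : star v ⬝ᵥ (P * C).mulVec v = lam * (star v ⬝ᵥ P.mulVec v) := by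
      rw [← mulVec_mulVec, hvC, mulVec_smul, dotProduct_smul]
      rfl
    have h3 : star v ⬝ᵥ (((2 * μ : ℝ) : ℂ) • P).mulVec v
        = ((2 * μ : ℝ) : ℂ) * (star v ⬝ᵥ P.mulVec v) := by
      rw [smul_mulVec, dotProduct_smul]
      rfl
    rw [sub_mulVec, add_mulVec, dotProduct_sub, dotProduct_add, h1, h2, h3]
    have hz : (starRingEnd ℂ) lam + lam - ((2 * μ : ℝ) : ℂ) = 0 := by
      apply Complex.ext <;> simp [← hlam] <;> ring
    ring_nf
    rw [show (starRingEnd ℂ) lam = ((2 * μ : ℝ) : ℂ) - lam by linear_combination hz]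
    ring
  have hQv := psd_mulVec_eq_zero hineq hq
  -- P *ᵥ v is an eigenvector of Cᴴ
  have hPv : Cᴴ.mulVec (P.mulVec v) = (starRingEnd ℂ) lam • (P.mulVec v) := by
    rw [sub_mulVec, add_mulVec, ← mulVec_mulVec, ← mulVec_mulVec, hvC, mulVec_smul,
      smul_mulVec, sub_eq_zero] at hQv
    have : Cᴴ.mulVec (P.mulVec v) = (((2 * μ : ℝ) : ℂ) - lam) • P.mulVec v := by
      rw [sub_smul]
      rw [← hQv]
      abel
    rw [this]
    congr 1
    apply Complex.ext <;> simp [← hlam] <;> ring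
  by_cases hDD : D 0 0 = D 1 1
  · -- C is a scalar matrix; use the spectral theorem for P
    have hCs : C = lam • 1 := by
      have hDc : D = D 0 0 • 1 := by
        ext i j
        fin_cases i <;> fin_cases j <;>
          simp [Matrix.one_apply, hD (show (0 : Fin 2) ≠ 1 by decide),
            hD (show (1 : Fin 2) ≠ 0 by decide), hDD.symm]
      have hC1 : C = D 0 0 • 1 := by
        conv_lhs => rw [hC, hDc]
        rw [Matrix.mul_smul, Matrix.smul_mul, mul_one, mul_nonsing_inv _ hV]
      have : D 0 0 • v = lam • v := by
        rw [← hvC, hC1, smul_mulVec, one_mulVec]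
      have hdl : D 0 0 = lam := by
        by_contra hne
        apply hv0
        have := sub_eq_zero.mpr this
        rw [← sub_smul] at this
        rcases smul_eq_zero.mp this with h | h
        · exact absurd (sub_eq_zero.mp h) hne
        · exact absurd h hv0
      rw [hC1, hdl]
    have hH : P.IsHermitian := hP.1
    set U : Matrix (Fin 2) (Fin 2) ℂ := (Matrix.IsHermitian.eigenvectorUnitary hH : Matrix (Fin 2) (Fin 2) ℂ) with hU
    have hUU : star U * U = 1 :=
      Matrix.mem_unitaryGroup_iff'.mp (Matrix.IsHermitian.eigenvectorUnitary hH).2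
    have hspec : P = ∑ j, ((hH.eigenvalues j : ℝ) : ℂ) •
        vecMulVec (fun i => U i j) (star (fun i => U i j)) := by
      conv_lhs => rw [hH.spectral_theorem, Unitary.conjStarAlgAut_apply]
      rw [decomp_helper]
      refine Finset.sum_congr rfl fun j _ => rfl
    have hwnorm : ∀ j, ∑ i, ‖U i j‖ ^ 2 = 1 := by
      intro j
      have h1 : (star U * U) j j = 1 := by rw [hUU]; simp
      have h2 : ∑ i, (starRingEnd ℂ) (U i j) * U i j = 1 := by
        simpa [mul_apply, star_apply] using h1
      have h3 : ((∑ i, ‖U i j‖ ^ 2 : ℝ) : ℂ) = 1 := by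
        push_cast
        rw [← h2]
        refine Finset.sum_congr rfl fun i _ => ?_
        rw [mul_comm, Complex.mul_conj]
        rw [Complex.normSq_eq_norm_sq]
        push_cast
        rfl
      exact_mod_cast h3
    refine ⟨fun j => fun i => U i j, fun j => hH.eigenvalues j, fun _ => lam, ?_, ?_, ?_, ?_, ?_⟩
    · exact fun j => hP.eigenvalues_pos j
    · exact hwnorm
    · intro j hj
      have h0 : ∀ i, U i j = 0 := fun i => congrFun hj i
      have := hwnorm j
      simp [h0] at this
    · intro j
      rw [hCs]
      simp [conjTranspose_smul, smul_mulVec, one_mulVec]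
    · exact hspec
  · -- two distinct eigenvalues
    have hVV : V * V⁻¹ = 1 := mul_nonsing_inv _ hV
    have hVV' : V⁻¹ * V = 1 := nonsing_inv_mul _ hV
    set u' : Fin 2 → ℂ := V⁻¹.mulVec v with hu'
    have hvu : V.mulVec u' = v := by
      rw [hu', mulVec_mulVec, hVV, one_mulVec]
    have hu'0 : u' ≠ 0 := by
      intro h
      apply hv0
      rw [← hvu, h, mulVec_zero]
    have hDu' : D.mulVec u' = lam • u' := by
      have h1 : V⁻¹ * (V * D * V⁻¹) = D * V⁻¹ := by
        simp only [← Matrix.mul_assoc]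
        rw [hVV', one_mul]
      calc D.mulVec u' = (D * V⁻¹).mulVec v := by rw [hu', mulVec_mulVec]
        _ = V⁻¹.mulVec (C.mulVec v) := by rw [hC, mulVec_mulVec, h1]
        _ = lam • u' := by rw [hvC, mulVec_smul, hu']
    have hcomp : ∀ i, D i i * u' i = lam * u' i := by
      intro i
      have h := congrFun hDu' i
      rw [hDdiag] at h
      rw [mulVec_diagonal] at h
      simpa [Matrix.diag] using h
    obtain ⟨i₀, hi₀⟩ := Function.ne_iff.mp hu'0
    have hi₀' : u' i₀ ≠ 0 := by simpa using hi₀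
    have hDi₀ : D i₀ i₀ = lam := mul_right_cancel₀ hi₀' (hcomp i₀)
    set i₁ : Fin 2 := 1 - i₀ with hi₁def
    have hpair : ∀ a b : Fin 2, a ≠ b → (a = i₀ ∧ b = i₁) ∨ (a = i₁ ∧ b = i₀) := by
      intro a b h
      rw [hi₁def]
      omega
    have hDi₁ : D i₁ i₁ ≠ lam := by
      intro h
      apply hDD
      rcases hpair 0 1 (by decide) with ⟨h0, h1⟩ | ⟨h0, h1⟩ <;>
        rw [h0, h1] <;> rw [hDi₀, h]
    have hu'i₁ : u' i₁ = 0 := by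
      by_contra h
      exact hDi₁ (mul_right_cancel₀ h (hcomp i₁))
    have hvsm : v = u' i₀ • (fun k => V k i₀) := by
      funext k
      rw [← hvu]
      show ∑ m, V k m * u' m = u' i₀ * V k i₀
      rw [Finset.sum_eq_single i₀]
      · ring
      · intro b _ hb
        have hb1 : b = i₁ := by rw [hi₁def]; omega
        rw [hb1, hu'i₁, mul_zero]
      · intro h
        exact absurd (Finset.mem_univ i₀) h
    set w : Fin 2 → Fin 2 → ℂ := fun j k => (starRingEnd ℂ) (V⁻¹ j k) with hw
    have hdual : ∀ j k, (star (w j)) ⬝ᵥ (fun i => V i k) = if j = k then 1 else 0 := by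
      intro j k
      have h1 : (V⁻¹ * V) j k = if j = k then 1 else 0 := by rw [hVV']; simp [one_apply]
      rw [← h1]
      simp [dotProduct, mul_apply, hw]
    have hvcol0 : ∀ j, (fun i => V i j) ≠ (0 : Fin 2 → ℂ) := by
      intro j h
      have h2 := hdual j j
      rw [h, dotProduct_zero] at h2
      simp at h2
    have hw0 : ∀ j, w j ≠ 0 := by
      intro j h
      have h2 := hdual j j
      rw [h] at h2
      simp at h2
    have heig : ∀ j, Cᴴ.mulVec (w j) = (starRingEnd ℂ) (D j j) • (w j) := by
      intro j
      have hDV : V⁻¹ * C = D * V⁻¹ := by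
        rw [hC]
        simp only [← Matrix.mul_assoc]
        rw [hVV', one_mul]
      funext k
      have h1 : (V⁻¹ * C) j k = D j j * V⁻¹ j k := by
        rw [hDV]
        conv_lhs => rw [hDdiag]
        rw [diagonal_mul]
        rfl
      have h2 : (Cᴴ.mulVec (w j)) k = (starRingEnd ℂ) ((V⁻¹ * C) j k) := by
        simp only [mulVec, dotProduct, mul_apply, conjTranspose_apply, hw, map_sum,
          _root_.map_mul]
        refine Finset.sum_congr rfl fun m _ => ?_
        simp [Complex.star_def]
        ring
      rw [h2, h1]
      simp [hw, _root_.map_mul]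
    set G : Matrix (Fin 2) (Fin 2) ℂ := Vᴴ * P * V with hG
    have hGapp : ∀ j k, G j k = star (fun i => V i j) ⬝ᵥ P.mulVec (fun i => V i k) := by
      intro j k
      simp [hG, mul_apply, dotProduct, mulVec, conjTranspose_apply, Fin.sum_univ_two]
      ring
    have hGpos : ∀ j, 0 < (G j j).re ∧ (G j j).im = 0 := by
      intro j
      have h := hP.dotProduct_mulVec_pos (hvcol0 j)
      rw [← hGapp j j] at h
      rw [Complex.lt_def] at h
      exact ⟨by simpa using h.1, by simpa using h.2.symm⟩
    set cvec : Fin 2 → ℂ := fun j => star (fun i => V i j) ⬝ᵥ (P.mulVec v) with hcvec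
    have hCcol : ∀ j, C.mulVec (fun i => V i j) = D j j • (fun i => V i j) := by
      intro j
      have hCV : C * V = V * D := by
        rw [hC, Matrix.mul_assoc, hVV', mul_one]
      funext i
      have h1 : (C.mulVec fun k => V k j) i = (C * V) i j := by
        simp [mulVec, dotProduct, mul_apply]
      rw [h1, hCV]
      conv_lhs => rw [hDdiag]
      rw [mul_diagonal]
      simp [Matrix.diag]
      ring
    have hkey : ∀ j, (starRingEnd ℂ) (D j j) * cvec j = (starRingEnd ℂ) lam * cvec j := by
      intro j
      have h1 : star (fun i => V i j) ⬝ᵥ (Cᴴ.mulVec (P.mulVec v))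
          = (starRingEnd ℂ) (D j j) * cvec j := by
        rw [dotProduct_mulVec, ← star_mulVec, hCcol j, star_smul, smul_dotProduct]
        rfl
      have h2 : star (fun i => V i j) ⬝ᵥ (Cᴴ.mulVec (P.mulVec v))
          = (starRingEnd ℂ) lam * cvec j := by
        rw [hPv, dotProduct_smul]
        rfl
      rw [← h1, h2]
    have hci₁ : cvec i₁ = 0 := by
      have hk := hkey i₁
      have hsub : ((starRingEnd ℂ) (D i₁ i₁) - (starRingEnd ℂ) lam) * cvec i₁ = 0 := by
        linear_combination hk
      rcases mul_eq_zero.mp hsub with h | h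
      · exfalso
        apply hDi₁
        have h3 : (starRingEnd ℂ) (D i₁ i₁) = (starRingEnd ℂ) lam := by linear_combination h
        simpa using congrArg (starRingEnd ℂ) h3
      · exact h
    have hGoff : G i₁ i₀ = 0 := by
      have h1 : cvec i₁ = u' i₀ * G i₁ i₀ := by
        rw [hcvec]
        simp only
        conv_lhs => rw [hvsm]
        rw [mulVec_smul, dotProduct_smul, hGapp]
        rfl
      have h2 : u' i₀ * G i₁ i₀ = 0 := by rw [← h1, hci₁]
      rcases mul_eq_zero.mp h2 with h | h
      · exact absurd h hi₀'
      · exact h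
    have hGH : Gᴴ = G := by
      rw [hG]
      simp only [conjTranspose_mul, Matrix.conjTranspose_conjTranspose, hP.1.eq]
      simp only [Matrix.mul_assoc]
    have hGoff' : G i₀ i₁ = 0 := by
      have h1 : Gᴴ i₀ i₁ = G i₀ i₁ := by rw [hGH]
      rw [conjTranspose_apply, hGoff] at h1
      simpa using h1.symm
    have hGdiagmat : G = diagonal (fun j => G j j) := by
      ext a b
      by_cases hab : a = b
      · subst hab; simp
      · rw [diagonal_apply_ne _ hab]
        rcases hpair a b hab with ⟨h0, h1⟩ | ⟨h0, h1⟩ <;> rw [h0, h1]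
        · exact hGoff'
        · exact hGoff
    have hVH1 : (V⁻¹)ᴴ * Vᴴ = 1 := by
      rw [← conjTranspose_mul, hVV, conjTranspose_one]
    have hPdec : P = (V⁻¹)ᴴ * diagonal (fun j => G j j) * V⁻¹ := by
      rw [← hGdiagmat]
      calc P = ((V⁻¹)ᴴ * Vᴴ) * P * (V * V⁻¹) := by
              rw [hVH1, hVV, one_mul, mul_one]
        _ = (V⁻¹)ᴴ * G * V⁻¹ := by rw [hG]; simp only [Matrix.mul_assoc]
    have hfin : P = ∑ j, (((G j j).re : ℝ) : ℂ) • vecMulVec (w j) (star (w j)) := by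
      rw [hPdec, decomp_helper]
      refine Finset.sum_congr rfl fun j _ => ?_
      have e1 : (((G j j).re : ℝ) : ℂ) = G j j := by
        apply Complex.ext
        · simp
        · simp [(hGpos j).2]
      rw [e1]
      congr 1
      ext i k
      simp [hw, vecMulVec_apply, conjTranspose_apply]
    exact normalize_decomp P C w (fun j => (G j j).re) (fun j => D j j)
      hw0 (fun j => (hGpos j).1) heig hfin
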